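/- Let E_K be any permutation of {0,1}^n, let h ∈ {0,1}^n, and let x ∈ {0,1}^n. With empty tweak, let C^(1) = C_1^(1) = HCTR_{K,h}(x) and C^(2) = C_1^(2) ‖ C_2^(2) = HCTR_{K,h}(x‖0), where |C_1^(2)| = n and C_2^(2) is a single bit. If C_2^(2) = 1, then C_1^(1) ⊕ C_1^(2) = e · h², where e ∈ GF(2^n) is the field element corresponding to the n-bit string 1‖0^{n−1} (the padding pad(1) of the single bit 1). In particular, C_1^(1) ⊕ C_1^(2) determines h² and hence the hash key h. -/

import Mathlib

/-- Integer represented by a bit string (msb-first). -/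
def bitsToNat : List Bool → ℕ
  | [] => 0
  | b :: t => (if b then 2 ^ t.length else 0) + bitsToNat t

/-- An `n`-bit block from a bit string of length at most `n` (msb-first). -/
def blockToBV (n : ℕ) (l : List Bool) : BitVec n := BitVec.ofNat n (bitsToNat l)

/-- `pad`: append zeros on the right to get a full `n`-bit block. -/
def padBlock (n : ℕ) (l : List Bool) : BitVec n :=
  blockToBV n (l ++ List.replicate (n - l.length) false)

/-- `parse_n` followed by padding of the last block. -/
def blocksOf (n : ℕ) (Z : List Bool) : List (BitVec n) :=
  (Z.toChunks n).map (padBlock n)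

/-- Number of `n`-bit blocks obtained from parsing `Z`. -/
def numBlocks (n : ℕ) (Z : List Bool) : ℕ := (Z.toChunks n).length

/-- The HCTR hash function: `H_h(P) = h` if `P` is empty, and otherwise
`H_h(P) = P₁h^{m+1} ⊕ ⋯ ⊕ (P_m‖0^{n-r})h² ⊕ bin_n(|P|)h` (Horner evaluation),
where the equivalence `ι` identifies `{0,1}ⁿ` with `GF(2ⁿ)` (XOR = addition). -/
def hctrHash {n : ℕ} {F : Type*} [Field F] (ι : BitVec n ≃ F) (h : F)
    (P : List Bool) : F :=
  if P.isEmpty then h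
  else ((blocksOf n P).map ι ++ [ι (BitVec.ofNat n P.length)]).foldl
    (fun acc c => (acc + c) * h) 0

/-- Bits of an `n`-bit block, msb first. -/
def bvToBits (n : ℕ) (X : BitVec n) : List Bool :=
  (List.range n).map fun i => X.toNat.testBit (n - 1 - i)

/-- The internal value `CC = P₁ ⊕ H_h(P₂‖…‖P_m‖T)` of HCTR. -/
def hctrCC {n : ℕ} {F : Type*} [Field F] (ι : BitVec n ≃ F) (hk : BitVec n)
    (T P : List Bool) : BitVec n :=
  blockToBV n (P.take n) ^^^ ι.symm (hctrHash ι (ι hk) (P.drop n ++ T))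

/-- HCTR encryption with block-cipher permutation `E`, hash key `hk` and tweak `T`:
`CC = P₁ ⊕ H_h(P₂‖…‖P_m‖T)`, `S = CC ⊕ E(CC)`, `C_i = P_i ⊕ E(S ⊕ bin_n(i-1))`
(truncated to `|P_i|` bits) for `2 ≤ i ≤ m`, and `C₁ = E(CC) ⊕ H_h(C₂‖…‖C_m‖T)`. -/
def hctrEnc {n : ℕ} {F : Type*} [Field F] (ι : BitVec n ≃ F)
    (E : Equiv.Perm (BitVec n)) (hk : BitVec n) (T P : List Bool) : List Bool :=
  let CC : BitVec n := hctrCC ι hk T P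
  let S : BitVec n := CC ^^^ E CC
  let Crest : List Bool :=
    (((P.drop n).toChunks n).zipIdx.map fun p =>
      List.zipWith xor p.1 (bvToBits n (E (S ^^^ BitVec.ofNat n (p.2 + 1))))).flatten
  let C1 : BitVec n := E CC ^^^ ι.symm (hctrHash ι (ι hk) (Crest ++ T))
  bvToBits n C1 ++ Crest


lemma bitsToNat_append_singleton (l : List Bool) (b : Bool) :
    bitsToNat (l ++ [b]) = 2 * bitsToNat l + (if b then 1 else 0) := by
  induction l with
  | nil => cases b <;> simp [bitsToNat]
  | cons a t ih => cases a <;> simp [bitsToNat, ih, pow_succ] <;> ring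

lemma bitsToNat_testBits (n : ℕ) : ∀ m : ℕ,
    bitsToNat ((List.range n).map fun i => Nat.testBit m (n-1-i)) = m % 2^n := by
  induction n with
  | zero => intro m; simp [bitsToNat, Nat.mod_one]
  | succ n ih =>
    intro m
    rw [List.range_succ, List.map_append]
    have h1 : (List.range n).map (fun i => Nat.testBit m (n+1-1-i))
        = (List.range n).map (fun i => Nat.testBit (m/2) (n-1-i)) := by
      apply List.map_congr_left
      intro i hi
      rw [List.mem_range] at hi
      rw [show n+1-1-i = (n-1-i)+1 by omega, Nat.testBit_add_one]
    rw [h1, List.map_cons, List.map_nil, bitsToNat_append_singleton, ih]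
    rw [show n+1-1-n = 0 by omega, Nat.testBit_zero]
    rw [pow_succ', Nat.mod_mul]
    rcases Nat.mod_two_eq_zero_or_one m with h | h <;> simp [h] <;> ring

lemma blockToBV_bvToBits {n : ℕ} (X : BitVec n) :
    blockToBV n (bvToBits n X) = X := by
  unfold blockToBV bvToBits
  rw [bitsToNat_testBits, Nat.mod_eq_of_lt X.isLt, BitVec.ofNat_toNat]
  exact X.setWidth_eq

lemma toChunks_nil {α} (n : ℕ) : List.toChunks n ([]:List α) = [] := by cases n <;> rfl

lemma toChunks_singleton {α} (n : ℕ) (hn : 1 ≤ n) (a : α) :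
    List.toChunks n [a] = [[a]] := by
  obtain ⟨m, rfl⟩ : ∃ m, n = m + 1 := ⟨n - 1, by omega⟩
  rfl

lemma bitsToNat_replicate (k : ℕ) : bitsToNat (List.replicate k false) = 0 := by
  induction k <;> simp [bitsToNat, List.replicate_succ, *]

lemma padBlock_false (n : ℕ) : padBlock n [false] = 0 := by
  unfold padBlock blockToBV
  have h : ([false] ++ List.replicate (n - [false].length) false)
      = List.replicate (n - [false].length + 1) false := by
    simp [List.replicate_succ]
  rw [h, bitsToNat_replicate]
  rfl

lemma bvToBits_length {n : ℕ} (X : BitVec n) : (bvToBits n X).length = n := by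
  simp [bvToBits]

/-- Hash-key recovery attack on HCTR: with empty tweak, if the last bit `C₂⁽²⁾` of the
encryption of `x‖0` equals `1`, then `C₁⁽¹⁾ ⊕ C₁⁽²⁾ = e·h²`, where `e` corresponds to
the `n`-bit string `1‖0^{n-1} = pad(1)`. -/
theorem hctr_key_recovery (n : ℕ) (hn : 1 ≤ n)
    (F : Type*) [Field F] (ι : BitVec n ≃ F)
    (hι : ∀ x y : BitVec n, ι (x ^^^ y) = ι x + ι y)
    (hone : ι 1 = 1)
    (E : Equiv.Perm (BitVec n)) (hk x : BitVec n)
    (hbit : (hctrEnc ι E hk [] (bvToBits n x ++ [false])).drop n = [true]) :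
    ι (blockToBV n (hctrEnc ι E hk [] (bvToBits n x))) +
      ι (blockToBV n ((hctrEnc ι E hk [] (bvToBits n x ++ [false])).take n)) =
      ι (padBlock n [true]) * ι hk ^ 2 := by
  have h0n : (0#n : BitVec n) = 0 := rfl
  have hι0 : ι 0 = 0 := by
    have h := hι 0 0
    rw [BitVec.xor_self, h0n] at h
    exact (left_eq_add.mp h)
  have hchar : ∀ a : F, a + a = 0 := fun a => by
    rw [← Equiv.apply_symm_apply ι a, ← hι, BitVec.xor_self, h0n, hι0]
  have hL : ∀ X : BitVec n, (bvToBits n X).length = n := fun X => bvToBits_length X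
  have hBB : ∀ X : BitVec n, blockToBV n (bvToBits n X) = X := fun X => blockToBV_bvToBits X
  have hnil : hctrHash ι (ι hk) [] = ι hk := rfl
  have hone' : (BitVec.ofNat n 1 : BitVec n) = 1 := rfl
  have hhf : hctrHash ι (ι hk) [false] = ι hk := by
    unfold hctrHash blocksOf
    rw [toChunks_singleton n hn]
    simp only [List.isEmpty_cons, Bool.false_eq_true, if_false, List.map_cons, List.map_nil,
      padBlock_false, hι0, List.length_cons, List.length_nil, List.foldl_cons, List.foldl_nil,
      List.cons_append, List.nil_append, List.singleton_append, zero_add, hone']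
    rw [hone]
    ring
  have hht : hctrHash ι (ι hk) [true] = ι (padBlock n [true]) * ι hk ^ 2 + ι hk := by
    unfold hctrHash blocksOf
    rw [toChunks_singleton n hn]
    simp only [List.isEmpty_cons, Bool.false_eq_true, if_false, List.map_cons, List.map_nil,
      List.length_cons, List.length_nil, List.foldl_cons, List.foldl_nil,
      List.cons_append, List.nil_append, List.singleton_append, zero_add, hone']
    rw [hone]
    ring
  have hd1 : (bvToBits n x).drop n = [] := List.drop_eq_nil_of_le (le_of_eq (hL x))
  have ht1 : (bvToBits n x).take n = bvToBits n x := List.take_of_length_le (le_of_eq (hL x))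
  have ht2 : (bvToBits n x ++ [false]).take n = bvToBits n x := List.take_left' (hL x)
  have hd2 : (bvToBits n x ++ [false]).drop n = [false] := List.drop_left' (hL x)
  have hCC1 : hctrCC ι hk [] (bvToBits n x) = x ^^^ hk := by
    unfold hctrCC
    rw [ht1, hd1, hBB, List.append_nil, hnil, Equiv.symm_apply_apply]
  have hCC2 : hctrCC ι hk [] (bvToBits n x ++ [false]) = x ^^^ hk := by
    unfold hctrCC
    rw [ht2, hd2, hBB, List.append_nil, hhf, Equiv.symm_apply_apply]
  simp only [hctrEnc] at hbit ⊢
  rw [List.drop_left' (hL _)] at hbit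
  rw [hbit]
  rw [hd1, toChunks_nil]
  simp only [List.zipIdx_nil, List.map_nil, List.flatten_nil, List.append_nil, hnil,
    Equiv.symm_apply_apply]
  rw [List.take_left' (hL _), hBB, hBB, hCC1, hCC2, hht]
  rw [hι, hι]
  rw [Equiv.apply_symm_apply]
  linear_combination hchar (ι (E (x ^^^ hk))) + hchar (ι hk)
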